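/- Let p, r, N, D ≥ 1 and q ≥ 0 be integers. Consider the finite uniform probability space whose sample points are pairs (pos, σ), where pos : Fin D → Fin (p+q) → Fin r → Fin N is an arbitrary placement function (all N^{D(p+q)r} placements equally likely, modeling that every chunk is placed on an independently, uniformly chosen node) and σ is a permutation of Fin N (all N! removal orders equally likely, independent of pos). For l ∈ {0,…,N} let R_l(σ) = {σ(0), …, σ(l−1)} be the set of the first l removed nodes. Define the data persistency X(pos, σ) as the least l ∈ {1,…,N} such that there exists a document d ∈ Fin D with #{ i ∈ Fin (p+q) : for every j ∈ Fin r, pos d i j ∈ R_l(σ) } ≥ q+1 (such an l always exists since R_N(σ) contains every node). Then the expected value of X over this uniform probability space equals Σ_{l=0}^{N} (1 − I_{(l/N)^r}(q+1, p))^D. -/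

import Mathlib

/-- The regularized incomplete Beta function `I_x(a, b)` for positive integer
parameters `a, b`. -/
noncomputable def regIncBeta (a b : ℕ) (x : ℝ) : ℝ :=
  (∫ t in (0:ℝ)..1, t ^ (a - 1) * (1 - t) ^ (b - 1))⁻¹ *
    ∫ t in (0:ℝ)..x, t ^ (a - 1) * (1 - t) ^ (b - 1)

open Finset

private lemma id1 (n m : ℕ) (h1 : 1 ≤ m) (h2 : m ≤ n) :
    m * n.choose m = n * (n-1).choose (m-1) := by
  obtain ⟨a, rfl⟩ := Nat.exists_eq_add_of_le' (le_trans h1 h2)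
  obtain ⟨b, rfl⟩ := Nat.exists_eq_add_of_le' h1
  have h := Nat.add_one_mul_choose_eq a b
  simp only [Nat.add_sub_cancel]
  exact (mul_comm _ _).trans h.symm

private lemma id2 (n m : ℕ) (h1 : 1 ≤ n) :
    (n - m) * n.choose m = n * (n-1).choose m := by
  obtain ⟨a, rfl⟩ := Nat.exists_eq_add_of_le h1
  have h3 := Nat.choose_succ_right_eq (1+a) m
  have h4 := Nat.add_one_mul_choose_eq a m
  simp only [Nat.add_sub_cancel_left]
  have e : a + 1 = 1 + a := by omega
  rw [e] at h4
  rw [h4, h3]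
  exact mul_comm _ _

/-- partial binomial sum -/
noncomputable def binSum (n k : ℕ) (x : ℝ) : ℝ :=
  ∑ m ∈ Finset.Ico k (n+1), (n.choose m : ℝ) * x^m * (1-x)^(n-m)

private lemma deriv_term (n m : ℕ) (x : ℝ) :
    HasDerivAt (fun y : ℝ => (n.choose m : ℝ) * y^m * (1-y)^(n-m))
      ((n.choose m : ℝ) * (m * x^(m-1) * (1-x)^(n-m))
        - (n.choose m : ℝ) * ((n-m : ℕ) * x^m * (1-x)^(n-m-1))) x := by
  have h1 : HasDerivAt (fun y : ℝ => y^m) (m * x^(m-1)) x := hasDerivAt_pow m x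
  have hsub : HasDerivAt (fun y : ℝ => 1 - y) (0 - 1) x :=
    (hasDerivAt_const x (1:ℝ)).sub (hasDerivAt_id x)
  have h2 : HasDerivAt (fun y : ℝ => (1-y)^(n-m))
      (((n-m : ℕ) * (1-x)^(n-m-1)) * (0-1)) x :=
    (hasDerivAt_pow (n-m) (1-x)).comp x hsub
  have h3 := (h1.mul h2).const_mul ((n.choose m : ℝ))
  refine (h3.congr_deriv (by ring)).congr_of_eventuallyEq
    (Filter.Eventually.of_forall (fun y => by simp only [Pi.mul_apply]; ring))

private lemma binSum_hasDeriv (n k : ℕ) (hk : 1 ≤ k) (hkn : k ≤ n) (x : ℝ) :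
    HasDerivAt (binSum n k)
      ((n * (n-1).choose (k-1) : ℕ) * x^(k-1) * (1-x)^(n-k)) x := by
  have h : HasDerivAt (binSum n k)
      (∑ m ∈ Finset.Ico k (n+1),
        ((n.choose m : ℝ) * (m * x^(m-1) * (1-x)^(n-m))
          - (n.choose m : ℝ) * ((n-m : ℕ) * x^m * (1-x)^(n-m-1)))) x :=
    HasDerivAt.fun_sum (fun m _ => deriv_term n m x)
  convert h using 1
  set g : ℕ → ℝ := fun m => (n * (n-1).choose m : ℕ) * x^m * (1-x)^(n-1-m) with hg
  have hterm : ∀ m ∈ Finset.Ico k (n+1),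
      (n.choose m : ℝ) * (m * x^(m-1) * (1-x)^(n-m))
        - (n.choose m : ℝ) * ((n-m : ℕ) * x^m * (1-x)^(n-m-1))
      = g (m-1) - g m := by
    intro m hm
    simp only [Finset.mem_Ico] at hm
    have h1m : 1 ≤ m := le_trans hk hm.1
    have hmn : m ≤ n := by omega
    have e1 : ((m : ℝ) * n.choose m) = ((n * (n-1).choose (m-1) : ℕ) : ℝ) := by
      rw [← id1 n m h1m hmn]; push_cast; ring
    have e2 : (((n-m : ℕ) : ℝ) * n.choose m) = ((n * (n-1).choose m : ℕ) : ℝ) := by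
      rw [← id2 n m (le_trans h1m hmn)]; push_cast [Nat.cast_sub hmn]; ring
    have e3 : n - 1 - (m - 1) = n - m := by omega
    have e4 : n - m - 1 = n - 1 - m := by omega
    rw [hg]
    simp only
    rw [← e1, ← e2, e3, e4]
    ring
  rw [Finset.sum_congr rfl hterm]
  rw [Finset.sum_Ico_eq_sum_range]
  have hre : ∀ i, g (k + i - 1) - g (k + i) = -(g (k - 1 + (i+1)) - g (k - 1 + i)) := by
    intro i
    have e1 : k + i - 1 = k - 1 + i := by omega
    have e2 : k + i = k - 1 + (i + 1) := by omega
    rw [e1, e2]; ring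
  rw [Finset.sum_congr rfl (fun i _ => hre i), Finset.sum_neg_distrib,
    Finset.sum_range_sub (fun i => g (k - 1 + i))]
  have hgn : k - 1 + (n + 1 - k) = n := by omega
  have hzero : g n = 0 := by
    simp only [hg]
    rw [Nat.choose_eq_zero_of_lt (by omega : n - 1 < n)]
    simp
  have hgk : g (k - 1 + 0) = ((n * (n-1).choose (k-1) : ℕ) : ℝ) * x^(k-1) * (1-x)^(n-k) := by
    simp only [hg, Nat.add_zero]
    rw [(by omega : n - 1 - (k - 1) = n - k)]
  rw [hgn, hzero, hgk]
  ring

private lemma binSum_zero (n k : ℕ) (hk : 1 ≤ k) : binSum n k 0 = 0 := by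
  unfold binSum
  apply Finset.sum_eq_zero
  intro m hm
  simp only [Finset.mem_Ico] at hm
  rw [zero_pow (by omega : m ≠ 0)]
  ring

private lemma binSum_one (n k : ℕ) (hkn : k ≤ n) : binSum n k 1 = 1 := by
  unfold binSum
  rw [Finset.sum_eq_single_of_mem n (by simp [Finset.mem_Ico]; omega)]
  · simp
  · intro m hm hmn
    simp only [Finset.mem_Ico] at hm
    rw [sub_self, zero_pow (by omega : n - m ≠ 0)]
    ring

lemma regIncBeta_eq (p q : ℕ) (hp : 1 ≤ p) (x : ℝ) :
    regIncBeta (q+1) p x = binSum (p+q) (q+1) x := by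
  have hk : 1 ≤ q + 1 := by omega
  have hkn : q + 1 ≤ p + q := by omega
  set n := p + q with hn
  set c : ℕ := n * (n-1).choose q with hc
  have hcpos : 0 < c := Nat.mul_pos (by omega) (Nat.choose_pos (by omega))
  have hcR : (c : ℝ) ≠ 0 := by positivity
  have key : ∀ b : ℝ, ∫ t in (0:ℝ)..b, t ^ q * (1 - t) ^ (p - 1)
      = (binSum n (q+1) b - binSum n (q+1) 0) / c := by
    intro b
    have hint : ∫ t in (0:ℝ)..b, (c:ℝ) * (t ^ q * (1 - t) ^ (p - 1))
        = binSum n (q+1) b - binSum n (q+1) 0 := by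
      apply intervalIntegral.integral_eq_sub_of_hasDerivAt
      · intro y _
        have hd := binSum_hasDeriv n (q+1) hk hkn y
        have e1 : q + 1 - 1 = q := rfl
        have e2 : n - (q+1) = p - 1 := by omega
        rw [e1, e2] at hd
        have e3 : (c:ℝ) * (y ^ q * (1 - y) ^ (p - 1))
            = ((n * (n-1).choose q : ℕ) : ℝ) * y ^ q * (1 - y) ^ (p - 1) := by
          rw [hc]; ring
        rw [e3]
        exact hd
      · apply Continuous.intervalIntegrable
        continuity
    rw [intervalIntegral.integral_const_mul] at hint
    field_simp at hint ⊢
    linarith [hint]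
  unfold regIncBeta
  have e1 : q + 1 - 1 = q := rfl
  rw [e1, key 1, key x, binSum_zero n (q+1) hk, binSum_one n (q+1) hkn]
  field_simp
  ring

theorem regIncBeta_compl (p q : ℕ) (hp : 1 ≤ p) (x : ℝ) :
    1 - regIncBeta (q+1) p x
      = ∑ m ∈ Finset.range (q+1),
          ((p+q).choose m : ℝ) * x^m * (1-x)^(p+q-m) := by
  rw [regIncBeta_eq p q hp x]
  have hb : ∑ m ∈ Finset.range (p+q+1),
      ((p+q).choose m : ℝ) * x^m * (1-x)^(p+q-m) = 1 := by
    have h := add_pow x (1-x) (p+q)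
    have hx : x + (1-x) = (1:ℝ) := by ring
    rw [hx, one_pow] at h
    calc ∑ m ∈ Finset.range (p+q+1), ((p+q).choose m : ℝ) * x^m * (1-x)^(p+q-m)
        = ∑ m ∈ Finset.range (p+q+1), x^m * (1-x)^(p+q-m) * ((p+q).choose m : ℝ) :=
          Finset.sum_congr rfl (fun m _ => by ring)
      _ = 1 := h.symm
  have hsplit := Finset.sum_range_add_sum_Ico
      (fun m => ((p+q).choose m : ℝ) * x^m * (1-x)^(p+q-m))
      (by omega : q + 1 ≤ p + q + 1)
  unfold binSum
  rw [← hsplit] at hb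
  linarith


open Finset

/-- counting functions with all values satisfying P -/
lemma card_filter_pi {α β : Type*} [Fintype α] [Fintype β] [DecidableEq α]
    (P : β → Prop) [DecidablePred P] :
    (Finset.univ.filter fun g : α → β => ∀ a, P (g a)).card
      = (Finset.univ.filter P).card ^ (Fintype.card α) := by
  classical
  rw [← Fintype.card_subtype]
  rw [Fintype.card_congr (Equiv.subtypePiEquivPi (p := fun _ b => P b))]
  simp [Fintype.card_subtype]

lemma card_filter_exact {α β : Type*} [Fintype α] [Fintype β] [DecidableEq α]
    (P : β → Prop) [DecidablePred P] (T : Finset α) :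
    (Finset.univ.filter fun g : α → β => ∀ a, (P (g a) ↔ a ∈ T)).card
      = (Finset.univ.filter P).card ^ T.card
        * (Finset.univ.filter fun b => ¬ P b).card ^ (Fintype.card α - T.card) := by
  classical
  rw [← Fintype.card_subtype]
  rw [Fintype.card_congr (Equiv.subtypePiEquivPi (p := fun a b => P b ↔ a ∈ T))]
  rw [Fintype.card_pi]
  have h : ∀ a : α, Fintype.card {b : β // P b ↔ a ∈ T}
      = if a ∈ T then (Finset.univ.filter P).card
        else (Finset.univ.filter fun b => ¬ P b).card := by
    intro a
    rw [Fintype.card_subtype]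
    by_cases ha : a ∈ T <;> simp [ha]
  rw [Finset.prod_congr rfl (fun a _ => h a), Finset.prod_ite]
  have hT : Finset.univ.filter (fun a : α => a ∈ T) = T := by ext a; simp
  have hTc : (Finset.univ.filter fun a : α => ¬ a ∈ T).card = Fintype.card α - T.card := by
    have := Finset.card_filter_add_card_filter_not (s := (Finset.univ : Finset α))
      (fun a => a ∈ T)
    rw [hT] at this
    simp only [Finset.card_univ] at this
    omega
  rw [Finset.prod_const, Finset.prod_const, hT, hTc]

lemma card_filter_atMost {α β : Type*} [Fintype α] [Fintype β] [DecidableEq α]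
    (P : β → Prop) [DecidablePred P] (s : ℕ) :
    (Finset.univ.filter fun g : α → β =>
        (Finset.univ.filter fun a => P (g a)).card ≤ s).card
      = ∑ m ∈ Finset.range (s+1), (Fintype.card α).choose m
          * (Finset.univ.filter P).card ^ m
          * (Finset.univ.filter fun b => ¬ P b).card ^ (Fintype.card α - m) := by
  classical
  set A := (Finset.univ.filter P).card
  set B := (Finset.univ.filter fun b => ¬ P b).card
  set n := Fintype.card α
  set t : Finset (Finset α) :=
    (Finset.range (s+1)).biUnion (fun m => Finset.powersetCard m Finset.univ) with ht
  set f : (α → β) → Finset α := fun g => Finset.univ.filter fun a => P (g a) with hf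
  set S := Finset.univ.filter fun g : α → β => (f g).card ≤ s with hS
  have hmem : ∀ g ∈ S, f g ∈ t := by
    intro g hg
    simp only [hS, Finset.mem_filter] at hg
    rw [ht]
    apply Finset.mem_biUnion.2
    exact ⟨(f g).card, Finset.mem_range.2 (by omega),
      Finset.mem_powersetCard.2 ⟨Finset.subset_univ _, rfl⟩⟩
  rw [Finset.card_eq_sum_card_fiberwise hmem, ht]
  rw [Finset.sum_biUnion]
  · apply Finset.sum_congr rfl
    intro m hm
    simp only [Finset.mem_range] at hm
    have hfiber : ∀ T ∈ Finset.powersetCard m Finset.univ,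
        (S.filter fun g => f g = T).card = A ^ m * B ^ (n - m) := by
      intro T hT
      obtain ⟨-, hTcard⟩ := Finset.mem_powersetCard.1 hT
      have heq : (S.filter fun g => f g = T)
          = Finset.univ.filter fun g : α → β => ∀ a, (P (g a) ↔ a ∈ T) := by
        ext g
        simp only [hS, Finset.mem_filter, Finset.mem_univ, true_and, hf]
        constructor
        · rintro ⟨-, h2⟩ a
          rw [← h2]; simp
        · intro h
          have h2 : Finset.univ.filter (fun a => P (g a)) = T := by
            ext a; simp [h a]
          refine ⟨?_, h2⟩
          rw [h2, hTcard]
          omega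
      rw [heq, card_filter_exact P T, hTcard]
    rw [Finset.sum_congr rfl hfiber, Finset.sum_const, Finset.card_powersetCard,
      Finset.card_univ]
    simp [mul_assoc]
    exact Or.inl rfl
  · intro m₁ h₁ m₂ h₂ hne
    apply Finset.disjoint_left.2
    intro T hT₁ hT₂
    simp only [Finset.coe_range, Set.mem_Iio] at h₁ h₂
    obtain ⟨-, e₁⟩ := Finset.mem_powersetCard.1 hT₁
    obtain ⟨-, e₂⟩ := Finset.mem_powersetCard.1 hT₂
    exact hne (e₁ ▸ e₂ ▸ rfl)

lemma card_filter_fin_lt (N l : ℕ) (hl : l ≤ N) :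
    (Finset.univ.filter fun k : Fin N => (k : ℕ) < l).card = l := by
  rcases Nat.lt_or_ge l N with h | h
  · have : (Finset.univ.filter fun k : Fin N => (k : ℕ) < l)
        = Finset.Iio (⟨l, h⟩ : Fin N) := by
      ext k
      simp [Finset.mem_Iio, Fin.lt_def]
    rw [this, Fin.card_Iio]
  · have hlN : l = N := le_antisymm hl h
    subst hlN
    rw [Finset.filter_true_of_mem (fun k _ => k.isLt), Finset.card_univ, Fintype.card_fin]

lemma card_filter_image_lt {N : ℕ} (σ : Equiv.Perm (Fin N)) (l : ℕ) (hl : l ≤ N) :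
    (Finset.univ.filter fun x : Fin N => ∃ k : Fin N, (k : ℕ) < l ∧ σ k = x).card = l := by
  classical
  have : (Finset.univ.filter fun x : Fin N => ∃ k : Fin N, (k : ℕ) < l ∧ σ k = x)
      = Finset.image σ (Finset.univ.filter fun k : Fin N => (k : ℕ) < l) := by
    ext x
    simp only [Finset.mem_filter, Finset.mem_univ, true_and, Finset.mem_image]
  rw [this, Finset.card_image_of_injective _ σ.injective, card_filter_fin_lt N l hl]


open Finset

lemma sInf_gt {S : Set ℕ} (hmono : ∀ a b, a ≤ b → a ∈ S → b ∈ S)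
    (hne : S.Nonempty) (l : ℕ) : l < sInf S ↔ l ∉ S := by
  constructor
  · intro h hl
    exact absurd (Nat.sInf_le hl) (by omega)
  · intro hl
    by_contra hc
    push_neg at hc
    exact hl (hmono _ _ hc (Nat.sInf_mem hne))

lemma sum_nat_eq_sum_card {ι : Type*} [Fintype ι] (f : ι → ℕ) (M : ℕ)
    (h : ∀ a, f a ≤ M) :
    ∑ a, f a = ∑ l ∈ Finset.range (M+1), (Finset.univ.filter fun a => l < f a).card := by
  classical
  have h1 : ∀ a : ι, f a = ∑ l ∈ Finset.range (M+1), if l < f a then 1 else 0 := by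
    intro a
    rw [← Finset.card_filter]
    have : (Finset.range (M+1)).filter (fun l => l < f a) = Finset.range (f a) := by
      ext i
      simp only [Finset.mem_filter, Finset.mem_range]
      constructor
      · rintro ⟨-, h2⟩; exact h2
      · intro h2; exact ⟨by have := h a; omega, h2⟩
    rw [this, Finset.card_range]
  rw [Finset.sum_congr rfl (fun a _ => h1 a), Finset.sum_comm]
  apply Finset.sum_congr rfl
  intro l _
  rw [Finset.card_filter]

lemma card_filter_prod {A B : Type*} [Fintype A] [Fintype B]
    (f : A → B → Prop) [∀ a b, Decidable (f a b)] :
    (Finset.univ.filter fun ω : A × B => f ω.1 ω.2).card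
      = ∑ b : B, (Finset.univ.filter fun a : A => f a b).card := by
  rw [Finset.card_filter, Fintype.sum_prod_type_right]
  apply Finset.sum_congr rfl
  intro b _
  rw [Finset.card_filter]

lemma per_sigma (p q r N D : ℕ) (σ : Equiv.Perm (Fin N)) (l : ℕ) (hl : l ≤ N) :
    (Finset.univ.filter fun pos : Fin D → Fin (p+q) → Fin r → Fin N =>
        ∀ d, (Finset.univ.filter fun i : Fin (p+q) =>
          ∀ j : Fin r, ∃ k : Fin N, (k:ℕ) < l ∧ σ k = pos d i j).card ≤ q).card
      = (∑ m ∈ Finset.range (q+1),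
          (p+q).choose m * (l^r)^m * (N^r - l^r)^(p+q-m))^D := by
  have hA : (Finset.univ.filter
      fun h : Fin r → Fin N => ∀ j : Fin r, ∃ k : Fin N, (k:ℕ) < l ∧ σ k = h j).card
      = l^r := by
    have h3 := card_filter_pi (α := Fin r) (fun x : Fin N => ∃ k : Fin N, (k:ℕ) < l ∧ σ k = x)
    rw [card_filter_image_lt σ l hl, Fintype.card_fin] at h3
    convert h3 using 2
    all_goals congr!
  have hcard : Fintype.card (Fin r → Fin N) = N^r := by
    simp
  have hB : (Finset.univ.filter
      fun h : Fin r → Fin N => ¬ ∀ j : Fin r, ∃ k : Fin N, (k:ℕ) < l ∧ σ k = h j).card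
      = N^r - l^r := by
    have h2 := Finset.card_filter_add_card_filter_not
      (s := (Finset.univ : Finset (Fin r → Fin N)))
      (fun h : Fin r → Fin N => ∀ j : Fin r, ∃ k : Fin N, (k:ℕ) < l ∧ σ k = h j)
    have hu : (Finset.univ : Finset (Fin r → Fin N)).card = N^r := by
      rw [Finset.card_univ]; exact hcard
    rw [hu, hA] at h2
    exact Nat.eq_sub_of_add_eq' h2
  have hin : (Finset.univ.filter fun g : Fin (p+q) → Fin r → Fin N =>
      (Finset.univ.filter fun i : Fin (p+q) =>
        ∀ j : Fin r, ∃ k : Fin N, (k:ℕ) < l ∧ σ k = g i j).card ≤ q).card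
      = ∑ m ∈ Finset.range (q+1),
          (p+q).choose m * (l^r)^m * (N^r - l^r)^(p+q-m) := by
    have h2 := card_filter_atMost (α := Fin (p+q))
      (fun h : Fin r → Fin N => ∀ j : Fin r, ∃ k : Fin N, (k:ℕ) < l ∧ σ k = h j) q
    rw [hA, hB, Fintype.card_fin] at h2
    convert h2 using 2
    all_goals congr!
  have h := card_filter_pi (α := Fin D) (fun g : Fin (p+q) → Fin r → Fin N =>
    (Finset.univ.filter fun i : Fin (p+q) =>
      ∀ j : Fin r, ∃ k : Fin N, (k:ℕ) < l ∧ σ k = g i j).card ≤ q)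
  rw [Fintype.card_fin, hin] at h
  convert h using 2
  all_goals congr!

open Classical in
/-- Data persistency for the random replication strategy: given a placement
`pos` of the `r` copies of the `p+q` chunks of each of the `D` documents on
`N` nodes, and a removal order `σ`, this is the least `l ≥ 1` such that after
removing the nodes `σ 0, …, σ (l-1)` some document `d` has at least `q+1` of
its `p+q` replication multisets entirely contained in the removed nodes. -/
noncomputable def randPersistency (p q r N D : ℕ)
    (pos : Fin D → Fin (p + q) → Fin r → Fin N) (σ : Equiv.Perm (Fin N)) : ℕ :=
  sInf {l | 1 ≤ l ∧ ∃ d : Fin D,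
    q + 1 ≤ (Finset.univ.filter (fun i : Fin (p + q) =>
      ∀ j : Fin r, ∃ k : Fin N, (k : ℕ) < l ∧ σ k = pos d i j)).card}

theorem stmt6 (p q r N D : ℕ) (hp : 1 ≤ p) (hr : 1 ≤ r) (hN : 1 ≤ N)
    (hD : 1 ≤ D) :
    (∑ ω : (Fin D → Fin (p + q) → Fin r → Fin N) × Equiv.Perm (Fin N),
        (randPersistency p q r N D ω.1 ω.2 : ℝ)) /
      (Fintype.card ((Fin D → Fin (p + q) → Fin r → Fin N) ×
        Equiv.Perm (Fin N)) : ℝ)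
      = ∑ l ∈ Finset.range (N + 1),
          (1 - regIncBeta (q + 1) p (((l : ℝ) / (N : ℝ)) ^ r)) ^ D := by
  classical
  -- membership of N in the defining set
  have hmemN : ∀ (pos : Fin D → Fin (p + q) → Fin r → Fin N) (σ : Equiv.Perm (Fin N)),
      N ∈ {l : ℕ | 1 ≤ l ∧ ∃ d : Fin D,
        q + 1 ≤ (Finset.univ.filter (fun i : Fin (p + q) =>
          ∀ j : Fin r, ∃ k : Fin N, (k : ℕ) < l ∧ σ k = pos d i j)).card} := by
    intro pos σ
    refine ⟨hN, ⟨0, hD⟩, ?_⟩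
    have hfull : (Finset.univ.filter (fun i : Fin (p + q) =>
        ∀ j : Fin r, ∃ k : Fin N, (k : ℕ) < N ∧ σ k = pos ⟨0, hD⟩ i j)) = Finset.univ := by
      apply Finset.filter_true_of_mem
      intro i _
      intro j
      exact ⟨σ.symm (pos ⟨0, hD⟩ i j), (σ.symm (pos ⟨0, hD⟩ i j)).isLt,
        σ.apply_symm_apply _⟩
    rw [hfull, Finset.card_univ, Fintype.card_fin]
    omega
  have hmono : ∀ (pos : Fin D → Fin (p + q) → Fin r → Fin N) (σ : Equiv.Perm (Fin N))
      (a b : ℕ), a ≤ b →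
      a ∈ {l : ℕ | 1 ≤ l ∧ ∃ d : Fin D,
        q + 1 ≤ (Finset.univ.filter (fun i : Fin (p + q) =>
          ∀ j : Fin r, ∃ k : Fin N, (k : ℕ) < l ∧ σ k = pos d i j)).card} →
      b ∈ {l : ℕ | 1 ≤ l ∧ ∃ d : Fin D,
        q + 1 ≤ (Finset.univ.filter (fun i : Fin (p + q) =>
          ∀ j : Fin r, ∃ k : Fin N, (k : ℕ) < l ∧ σ k = pos d i j)).card} := by
    rintro pos σ a b hab ⟨h1, d, hd⟩
    refine ⟨by omega, d, le_trans hd (Finset.card_le_card ?_)⟩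
    apply Finset.monotone_filter_right
    intro i _ hi j
    obtain ⟨k, hk, he⟩ := hi j
    exact ⟨k, by omega, he⟩
  have hXle : ∀ ω : (Fin D → Fin (p + q) → Fin r → Fin N) × Equiv.Perm (Fin N),
      randPersistency p q r N D ω.1 ω.2 ≤ N :=
    fun ω => Nat.sInf_le (hmemN ω.1 ω.2)
  have hgt : ∀ (pos : Fin D → Fin (p + q) → Fin r → Fin N) (σ : Equiv.Perm (Fin N))
      (l : ℕ), l ≤ N →
      (l < randPersistency p q r N D pos σ ↔
        ∀ d : Fin D, (Finset.univ.filter (fun i : Fin (p + q) =>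
          ∀ j : Fin r, ∃ k : Fin N, (k : ℕ) < l ∧ σ k = pos d i j)).card ≤ q) := by
    intro pos σ l hl
    unfold randPersistency
    rw [sInf_gt (hmono pos σ) ⟨N, hmemN pos σ⟩ l]
    simp only [Set.mem_setOf_eq, not_and, not_exists, not_le]
    constructor
    · intro h d
      rcases Nat.eq_zero_or_pos l with h0 | h1
      · subst h0
        have hempty : (Finset.univ.filter (fun i : Fin (p + q) =>
            ∀ j : Fin r, ∃ k : Fin N, (k : ℕ) < 0 ∧ σ k = pos d i j)) = ∅ := by
          apply Finset.filter_false_of_mem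
          intro i _ hcon
          obtain ⟨k, hk, -⟩ := hcon ⟨0, hr⟩
          omega
        rw [hempty]
        simp
      · have h2 := h h1 d
        omega
    · intro h h1 d
      have := h d
      omega
  -- natural-number counting identity
  have hsum := sum_nat_eq_sum_card
    (fun ω : (Fin D → Fin (p + q) → Fin r → Fin N) × Equiv.Perm (Fin N) =>
      randPersistency p q r N D ω.1 ω.2) N hXle
  have hcount : ∀ l ∈ Finset.range (N + 1),
      (Finset.univ.filter
        (fun ω : (Fin D → Fin (p + q) → Fin r → Fin N) × Equiv.Perm (Fin N) =>
          l < randPersistency p q r N D ω.1 ω.2)).card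
      = N.factorial * (∑ m ∈ Finset.range (q+1),
          (p+q).choose m * (l^r)^m * (N^r - l^r)^(p+q-m))^D := by
    intro l hld
    have hl : l ≤ N := by simp only [Finset.mem_range] at hld; omega
    have hfeq : (Finset.univ.filter
        (fun ω : (Fin D → Fin (p + q) → Fin r → Fin N) × Equiv.Perm (Fin N) =>
          l < randPersistency p q r N D ω.1 ω.2))
        = Finset.univ.filter
          (fun ω : (Fin D → Fin (p + q) → Fin r → Fin N) × Equiv.Perm (Fin N) =>
            ∀ d : Fin D, (Finset.univ.filter (fun i : Fin (p + q) =>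
              ∀ j : Fin r, ∃ k : Fin N, (k : ℕ) < l ∧ ω.2 k = ω.1 d i j)).card ≤ q) :=
      Finset.filter_congr (fun ω _ => by
        constructor
        · intro h; exact (hgt ω.1 ω.2 l hl).1 h
        · intro h; exact (hgt ω.1 ω.2 l hl).2 h)
    rw [hfeq]
    have hprod := card_filter_prod
      (A := Fin D → Fin (p + q) → Fin r → Fin N) (B := Equiv.Perm (Fin N))
      (fun pos σ => ∀ d : Fin D, (Finset.univ.filter (fun i : Fin (p + q) =>
        ∀ j : Fin r, ∃ k : Fin N, (k : ℕ) < l ∧ σ k = pos d i j)).card ≤ q)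
    rw [hprod]
    rw [Finset.sum_congr rfl (fun σ _ => per_sigma p q r N D σ l hl)]
    rw [Finset.sum_const, Finset.card_univ, Fintype.card_perm, Fintype.card_fin,
      smul_eq_mul]
  -- pass to the reals
  have hcast : (∑ ω : (Fin D → Fin (p + q) → Fin r → Fin N) × Equiv.Perm (Fin N),
        (randPersistency p q r N D ω.1 ω.2 : ℝ))
      = ∑ l ∈ Finset.range (N + 1),
          (((Finset.univ.filter
            (fun ω : (Fin D → Fin (p + q) → Fin r → Fin N) × Equiv.Perm (Fin N) =>
              l < randPersistency p q r N D ω.1 ω.2)).card : ℕ) : ℝ) := by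
    rw [← Nat.cast_sum, hsum, Nat.cast_sum]
  rw [hcast, Finset.sum_div]
  apply Finset.sum_congr rfl
  intro l hld
  have hl : l ≤ N := by simp only [Finset.mem_range] at hld; omega
  rw [hcount l hld]
  rw [regIncBeta_compl p q hp (((l : ℝ) / (N : ℝ)) ^ r)]
  have hcardtot : (Fintype.card ((Fin D → Fin (p + q) → Fin r → Fin N) ×
      Equiv.Perm (Fin N)) : ℝ) = (((N:ℝ)^r)^(p+q))^D * (N.factorial : ℝ) := by
    rw [Fintype.card_prod, Fintype.card_perm]
    have hfun : Fintype.card (Fin D → Fin (p + q) → Fin r → Fin N)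
        = ((N^r)^(p+q))^D := by
      simp [Fintype.card_fun]
    rw [hfun, Fintype.card_fin]
    push_cast
    ring
  rw [hcardtot]
  have hN0 : (0:ℝ) < (N:ℝ) := by exact_mod_cast hN
  have hNr : (0:ℝ) < (N:ℝ)^r := by positivity
  have hT : (0:ℝ) < (((N:ℝ)^r)^(p+q)) := by positivity
  have hNfac : (N.factorial : ℝ) ≠ 0 := by
    exact_mod_cast N.factorial_ne_zero
  have hle : l^r ≤ N^r := Nat.pow_le_pow_left hl r
  push_cast [Nat.cast_sub hle]
  have hS : (∑ m ∈ Finset.range (q+1), ((p+q).choose m : ℝ) * ((l:ℝ)^r)^m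
        * ((N:ℝ)^r - (l:ℝ)^r)^(p+q-m)) / (((N:ℝ)^r)^(p+q))
      = ∑ m ∈ Finset.range (q+1), ((p+q).choose m : ℝ) * (((l:ℝ)/(N:ℝ))^r)^m
        * (1 - ((l:ℝ)/(N:ℝ))^r)^(p+q-m) := by
    rw [Finset.sum_div]
    apply Finset.sum_congr rfl
    intro m hm
    have hmle : m ≤ p + q := by
      simp only [Finset.mem_range] at hm
      omega
    have hx : ((l:ℝ)/(N:ℝ))^r = (l:ℝ)^r / (N:ℝ)^r := div_pow _ _ _
    have h1x : 1 - ((l:ℝ)/(N:ℝ))^r = ((N:ℝ)^r - (l:ℝ)^r) / (N:ℝ)^r := by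
      rw [hx]
      field_simp
    have hden : ((N:ℝ)^r)^(p+q) = ((N:ℝ)^r)^m * ((N:ℝ)^r)^(p+q-m) := by
      rw [← pow_add]
      congr 1
      omega
    rw [h1x, hx, hden, div_pow, div_pow]
    field_simp
  rw [← hS, div_pow]
  field_simp
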